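/- For every plane rooted tree T of size n, the number of increasing labellings of T equals n! divided by the product over all subtrees S of T of |S| (the hook-length formula for trees). -/

import Mathlib

inductive PlaneTree : Type where
  | node : List PlaneTree → PlaneTree

namespace PlaneTree

mutual
  /-- number of nodes of a plane rooted tree -/
  def size : PlaneTree → ℕ
    | .node ts => 1 + sizeAux ts
  def sizeAux : List PlaneTree → ℕ
    | [] => 0
    | t :: ts => size t + sizeAux ts
end

mutual
  /-- product of the sizes of all subtrees (hook product) -/
  def hookProd : PlaneTree → ℕ
    | .node ts => size (.node ts) * hookProdAux ts
  def hookProdAux : List PlaneTree → ℕ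
    | [] => 1
    | t :: ts => hookProd t * hookProdAux ts
end

end PlaneTree

/-- plane rooted trees with labelled nodes -/
inductive LTree : Type where
  | node : ℕ → List LTree → LTree

namespace LTree

def rootLabel : LTree → ℕ
  | .node a _ => a

mutual
  /-- labels strictly increase along every root-to-leaf path -/
  def inc : LTree → Prop
    | .node a ts => incAux a ts
  def incAux : ℕ → List LTree → Prop
    | _, [] => True
    | a, t :: ts => (a < rootLabel t ∧ inc t) ∧ incAux a ts
end

mutual
  def labels : LTree → List ℕ
    | .node a ts => a :: labelsAux ts
  def labelsAux : List LTree → List ℕ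
    | [] => []
    | t :: ts => labels t ++ labelsAux ts
end

mutual
  /-- the underlying (unlabelled) plane tree -/
  def shape : LTree → PlaneTree
    | .node _ ts => .node (shapeAux ts)
  def shapeAux : List LTree → List PlaneTree
    | [] => []
    | t :: ts => shape t :: shapeAux ts
end

end LTree

/-- Increasing plane rooted trees of size `n`: increasing labelled plane trees whose
multiset of labels is exactly `{1, …, n}`. -/
def IncTreeSet (n : ℕ) : Set LTree :=
  {t | t.inc ∧ (t.labels).Perm (List.range' 1 n)}

/-- the number of increasing plane rooted trees of size `n` -/
noncomputable def numInc (n : ℕ) : ℕ := (IncTreeSet n).ncard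

/-- the number of increasing labellings of a given plane rooted tree `T` -/
noncomputable def numIncLab (T : PlaneTree) : ℕ :=
  {t : LTree | t.shape = T ∧ t.inc ∧ (t.labels).Perm (List.range' 1 T.size)}.ncard

/-- the number of plane rooted trees of size `n` -/
noncomputable def treeCount (n : ℕ) : ℕ := {T : PlaneTree | T.size = n}.ncard


/-! ### Auxiliary development for the hook-length formula -/

namespace PlaneTree

theorem size_pos (T : PlaneTree) : 0 < T.size := by
  cases T with
  | node ts => rw [size]; omega

mutual
theorem hookProd_pos : ∀ T : PlaneTree, 0 < T.hookProd
  | .node ts => by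
      rw [hookProd]
      exact Nat.mul_pos (size_pos _) (hookProdAux_pos ts)
theorem hookProdAux_pos : ∀ l : List PlaneTree, 0 < hookProdAux l
  | [] => by rw [hookProdAux]; exact Nat.one_pos
  | t :: ts => by
      rw [hookProdAux]
      exact Nat.mul_pos (hookProd_pos t) (hookProdAux_pos ts)
end

end PlaneTree

namespace LTree

def children : LTree → List LTree
  | .node _ l => l

theorem node_root_children : ∀ t : LTree, t = .node t.rootLabel t.children
  | .node _ _ => rfl

mutual
theorem labels_length : ∀ t : LTree, t.labels.length = t.shape.size
  | .node a ts => by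
      rw [labels, shape, PlaneTree.size, List.length_cons, labelsAux_length ts]
      omega
theorem labelsAux_length : ∀ l : List LTree,
    (labelsAux l).length = PlaneTree.sizeAux (shapeAux l)
  | [] => by rw [labelsAux, shapeAux, PlaneTree.sizeAux]; rfl
  | t :: ts => by
      rw [labelsAux, shapeAux, PlaneTree.sizeAux, List.length_append,
        labels_length t, labelsAux_length ts]
end

theorem rootLabel_mem_labels : ∀ t : LTree, t.rootLabel ∈ t.labels
  | .node a ts => by rw [labels, rootLabel]; exact List.mem_cons_self

mutual
theorem root_le_of_inc : ∀ t : LTree, t.inc → ∀ b ∈ t.labels, t.rootLabel ≤ b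
  | .node a ts => by
      intro h b hb
      rw [labels] at hb
      rw [rootLabel]
      rw [inc] at h
      rcases List.mem_cons.mp hb with rfl | hb
      · exact le_refl _
      · exact le_of_lt (lt_of_incAux ts a h b hb)
theorem lt_of_incAux : ∀ l : List LTree, ∀ a : ℕ, incAux a l → ∀ b ∈ labelsAux l, a < b
  | [], a => by intro _ b hb; rw [labelsAux] at hb; simp at hb
  | t :: ts, a => by
      intro h b hb
      rw [incAux] at h
      rw [labelsAux] at hb
      rcases List.mem_append.mp hb with hb | hb
      · exact lt_of_lt_of_le h.1.1 (root_le_of_inc t h.1.2 b hb)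
      · exact lt_of_incAux ts a h.2 b hb
end

mutual
theorem eq_of_shape_labels : ∀ t t' : LTree, t.shape = t'.shape → t.labels = t'.labels → t = t'
  | .node a ts, .node a' ts' => by
      intro hs hl
      rw [shape, shape] at hs
      rw [labels, labels] at hl
      injection hs with hs
      injection hl with h1 h2
      rw [h1, eqAux_of_shape_labels ts ts' hs h2]
theorem eqAux_of_shape_labels : ∀ l l' : List LTree,
    shapeAux l = shapeAux l' → labelsAux l = labelsAux l' → l = l'
  | [], [] => by intro _ _; rfl
  | [], t' :: ts' => by intro hs _; rw [shapeAux, shapeAux] at hs; exact absurd hs (by simp)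
  | t :: ts, [] => by intro hs _; rw [shapeAux, shapeAux] at hs; exact absurd hs (by simp)
  | t :: ts, t' :: ts' => by
      intro hs hl
      rw [shapeAux, shapeAux] at hs
      rw [labelsAux, labelsAux] at hl
      injection hs with hs1 hs2
      have hlen : t.labels.length = t'.labels.length := by
        rw [labels_length, labels_length, hs1]
      obtain ⟨hl1, hl2⟩ := List.append_inj hl hlen
      rw [eq_of_shape_labels t t' hs1 hl1, eqAux_of_shape_labels ts ts' hs2 hl2]
end

mutual
def map (f : ℕ → ℕ) : LTree → LTree
  | .node a ts => .node (f a) (mapAux f ts)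
def mapAux (f : ℕ → ℕ) : List LTree → List LTree
  | [] => []
  | t :: ts => map f t :: mapAux f ts
end

mutual
theorem shape_map (f : ℕ → ℕ) : ∀ t : LTree, (map f t).shape = t.shape
  | .node a ts => by rw [map, shape, shape, shapeAux_map f ts]
theorem shapeAux_map (f : ℕ → ℕ) : ∀ l : List LTree, shapeAux (mapAux f l) = shapeAux l
  | [] => by rw [mapAux]
  | t :: ts => by rw [mapAux, shapeAux, shapeAux, shape_map f t, shapeAux_map f ts]
end

mutual
theorem labels_map (f : ℕ → ℕ) : ∀ t : LTree, (map f t).labels = t.labels.map f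
  | .node a ts => by rw [map, labels, labels, labelsAux_map f ts, List.map_cons]
theorem labelsAux_map (f : ℕ → ℕ) : ∀ l : List LTree,
    labelsAux (mapAux f l) = (labelsAux l).map f
  | [] => by simp [mapAux, labelsAux]
  | t :: ts => by
      rw [mapAux, labelsAux, labelsAux, List.map_append, labels_map f t, labelsAux_map f ts]
end

theorem rootLabel_map (f : ℕ → ℕ) : ∀ t : LTree, (map f t).rootLabel = f t.rootLabel
  | .node a ts => by rw [map, rootLabel, rootLabel]

mutual
theorem inc_map (f : ℕ → ℕ) (s : Set ℕ) (hf : StrictMonoOn f s) :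
    ∀ t : LTree, t.inc → (∀ x ∈ t.labels, x ∈ s) → (map f t).inc
  | .node a ts => by
      intro h hsub
      rw [map, inc]
      rw [inc] at h
      rw [labels] at hsub
      exact incAux_map f s hf ts a h (hsub a (List.mem_cons_self))
        (fun x hx => hsub x (List.mem_cons_of_mem _ hx))
theorem incAux_map (f : ℕ → ℕ) (s : Set ℕ) (hf : StrictMonoOn f s) :
    ∀ (l : List LTree) (a : ℕ), incAux a l → a ∈ s → (∀ x ∈ labelsAux l, x ∈ s) →
      incAux (f a) (mapAux f l)
  | [], a => by intro _ _ _; rw [mapAux, incAux]; trivial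
  | t :: ts, a => by
      intro h ha hsub
      rw [incAux] at h
      rw [mapAux, incAux]
      rw [labelsAux] at hsub
      have hroot : t.rootLabel ∈ s :=
        hsub _ (List.mem_append_left _ (rootLabel_mem_labels t))
      refine ⟨⟨?_, ?_⟩, ?_⟩
      · rw [rootLabel_map]
        exact hf ha hroot h.1.1
      · exact inc_map f s hf t h.1.2 (fun x hx => hsub x (List.mem_append_left _ hx))
      · exact incAux_map f s hf ts a h.2 ha
          (fun x hx => hsub x (List.mem_append_right _ hx))
end

mutual
theorem map_id_of_eq (f : ℕ → ℕ) : ∀ t : LTree, (∀ x ∈ t.labels, f x = x) → map f t = t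
  | .node a ts => by
      intro h
      rw [map]
      rw [labels] at h
      rw [h a (List.mem_cons_self),
        mapAux_id_of_eq f ts (fun x hx => h x (List.mem_cons_of_mem _ hx))]
theorem mapAux_id_of_eq (f : ℕ → ℕ) : ∀ l : List LTree,
    (∀ x ∈ labelsAux l, f x = x) → mapAux f l = l
  | [] => by intro _; rw [mapAux]
  | t :: ts => by
      intro h
      rw [labelsAux] at h
      rw [mapAux, map_id_of_eq f t (fun x hx => h x (List.mem_append_left _ hx)),
        mapAux_id_of_eq f ts (fun x hx => h x (List.mem_append_right _ hx))]
end

mutual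
theorem map_map (f g : ℕ → ℕ) : ∀ t : LTree, map g (map f t) = map (g ∘ f) t
  | .node a ts => by rw [map, map, map, mapAux_map f g ts]; rfl
theorem mapAux_map (f g : ℕ → ℕ) : ∀ l : List LTree, mapAux g (mapAux f l) = mapAux (g ∘ f) l
  | [] => by rw [mapAux, mapAux, mapAux]
  | t :: ts => by rw [mapAux, mapAux, mapAux, map_map f g t, mapAux_map f g ts]
end

end LTree

open LTree PlaneTree

/-- labelled trees of shape `T` whose label multiset is `S` -/
def LabSet (T : PlaneTree) (S : Finset ℕ) : Set LTree :=
  {t | t.shape = T ∧ t.inc ∧ (t.labels : Multiset ℕ) = S.val}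

noncomputable def NL (T : PlaneTree) (S : Finset ℕ) : ℕ := Nat.card (LabSet T S)

theorem labels_mem_of_mem_labSet {T S} {t : LTree} (ht : t ∈ LabSet T S) :
    ∀ x ∈ t.labels, x ∈ S := by
  intro x hx
  rw [Finset.mem_def, ← ht.2.2]
  exact Multiset.mem_coe.mpr hx

theorem labSet_finite (T : PlaneTree) (S : Finset ℕ) : Finite (LabSet T S) := by
  have hfin : {l : List ℕ | (↑l : Multiset ℕ) = S.val}.Finite := by
    apply Set.Finite.subset (List.finite_toSet (Multiset.sort S.val (·≤·)).permutations)
    intro l hl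
    simp only [Set.mem_setOf_eq] at hl
    simp only [Set.mem_setOf_eq, List.mem_permutations]
    rw [← Multiset.coe_eq_coe, Multiset.sort_eq, hl]
  have : Finite ↥{l : List ℕ | (↑l : Multiset ℕ) = S.val} := hfin.to_subtype
  apply Finite.of_injective
    (fun t : LabSet T S => (⟨t.1.labels, t.2.2.2⟩ : {l : List ℕ | (↑l : Multiset ℕ) = S.val}))
  intro x y hxy
  apply Subtype.ext
  exact eq_of_shape_labels _ _ (by rw [x.2.1, y.2.1]) (congrArg Subtype.val hxy)

instance (T : PlaneTree) (S : Finset ℕ) : Finite (LabSet T S) := labSet_finite T S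

theorem root_eq_of_mem_labSet {T S} {t : LTree} (ht : t ∈ LabSet T S) {a : ℕ}
    (ha : a ∈ S) (hmin : ∀ b ∈ S, a ≤ b) : t.rootLabel = a := by
  have hmem : t.rootLabel ∈ S := labels_mem_of_mem_labSet ht _ (rootLabel_mem_labels t)
  have h1 : t.rootLabel ≤ a := by
    apply root_le_of_inc t ht.2.1
    have : a ∈ (↑t.labels : Multiset ℕ) := by rw [ht.2.2]; exact ha
    exact Multiset.mem_coe.mp this
  exact le_antisymm h1 (hmin _ hmem)

theorem labSet_map_mem (T : PlaneTree) (S S' : Finset ℕ) (f : ℕ → ℕ)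
    (hmono : StrictMonoOn f ↑S) (hval : S.val.map f = S'.val) :
    ∀ t ∈ LabSet T S, map f t ∈ LabSet T S' := by
  rintro t ⟨h1, h2, h3⟩
  refine ⟨?_, ?_, ?_⟩
  · rw [shape_map, h1]
  · exact inc_map f ↑S hmono t h2
      (fun x hx => labels_mem_of_mem_labSet ⟨h1, h2, h3⟩ x hx)
  · rw [labels_map, ← Multiset.map_coe, h3, hval]

theorem ordIso_facts (A B : Finset ℕ) (ε : {x // x ∈ A} ≃o {x // x ∈ B}) :
    StrictMonoOn (fun n => if h : n ∈ A then (ε ⟨n, h⟩ : ℕ) else 0) ↑A ∧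
    A.val.map (fun n => if h : n ∈ A then (ε ⟨n, h⟩ : ℕ) else 0) = B.val := by
  set f := fun n => if h : n ∈ A then (ε ⟨n, h⟩ : ℕ) else 0 with hf
  have hfeq : ∀ n (hn : n ∈ A), f n = (ε ⟨n, hn⟩ : ℕ) := fun n hn => dif_pos hn
  have hinj : Set.InjOn f ↑A := by
    intro x hx y hy hxy
    rw [hfeq x hx, hfeq y hy] at hxy
    have := ε.injective (Subtype.ext hxy)
    exact congrArg Subtype.val this
  constructor
  · intro x hx y hy hxy
    rw [hfeq x hx, hfeq y hy]
    exact Subtype.coe_lt_coe.mpr (ε.lt_iff_lt.mpr (Subtype.mk_lt_mk.mpr hxy))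
  · have himg : A.image f = B := by
      apply Finset.eq_of_subset_of_card_le
      · intro x hx
        obtain ⟨n, hn, rfl⟩ := Finset.mem_image.mp hx
        rw [hfeq n hn]
        exact (ε ⟨n, hn⟩).2
      · rw [Finset.card_image_of_injOn hinj]
        have : A.card = B.card := by
          rw [← Fintype.card_coe, ← Fintype.card_coe]
          exact Fintype.card_congr ε.toEquiv
        omega
    rw [← Finset.image_val_of_injOn hinj, himg]

/-- relabelling invariance -/
theorem NL_eq_of_card_eq (T : PlaneTree) (S S' : Finset ℕ) (h : S.card = S'.card) :
    NL T S = NL T S' := by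
  let e := (S.orderIsoOfFin rfl).symm.trans (S'.orderIsoOfFin h.symm)
  obtain ⟨hfm, hfv⟩ := ordIso_facts S S' e
  obtain ⟨hgm, hgv⟩ := ordIso_facts S' S e.symm
  set f := fun n => if h : n ∈ S then ((e ⟨n, h⟩ : {x // x ∈ S'}) : ℕ) else 0 with hfdef
  set g := fun n => if h : n ∈ S' then ((e.symm ⟨n, h⟩ : {x // x ∈ S}) : ℕ) else 0 with hgdef
  have hgf : ∀ n ∈ S, g (f n) = n := by
    intro n hn
    have h1 : f n = ((e ⟨n, hn⟩ : {x // x ∈ S'}) : ℕ) := dif_pos hn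
    have h2 : f n ∈ S' := by rw [h1]; exact (e ⟨n, hn⟩).2
    have h3 : g (f n) = ((e.symm ⟨f n, h2⟩ : {x // x ∈ S}) : ℕ) := dif_pos h2
    rw [h3]
    have : (⟨f n, h2⟩ : {x // x ∈ S'}) = e ⟨n, hn⟩ := Subtype.ext h1
    rw [this, OrderIso.symm_apply_apply]
  have hfg : ∀ n ∈ S', f (g n) = n := by
    intro n hn
    have h1 : g n = ((e.symm ⟨n, hn⟩ : {x // x ∈ S}) : ℕ) := dif_pos hn
    have h2 : g n ∈ S := by rw [h1]; exact (e.symm ⟨n, hn⟩).2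
    have h3 : f (g n) = ((e ⟨g n, h2⟩ : {x // x ∈ S'}) : ℕ) := dif_pos h2
    rw [h3]
    have : (⟨g n, h2⟩ : {x // x ∈ S}) = e.symm ⟨n, hn⟩ := Subtype.ext h1
    rw [this, OrderIso.apply_symm_apply]
  apply Nat.card_congr
  have hmem := labSet_map_mem T S S' f hfm hfv
  have hmem' := labSet_map_mem T S' S g hgm hgv
  have hid : ∀ t ∈ LabSet T S, map g (map f t) = t := by
    intro t ht
    rw [map_map]
    exact map_id_of_eq _ t (fun x hx => hgf x (labels_mem_of_mem_labSet ht x hx))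
  have hid' : ∀ t ∈ LabSet T S', map f (map g t) = t := by
    intro t ht
    rw [map_map]
    exact map_id_of_eq _ t (fun x hx => hfg x (labels_mem_of_mem_labSet ht x hx))
  exact ⟨fun t => ⟨map f t.1, hmem _ t.2⟩, fun t => ⟨map g t.1, hmem' _ t.2⟩,
    fun t => Subtype.ext (hid _ t.2), fun t => Subtype.ext (hid' _ t.2)⟩

theorem shapeAux_eq_nil : ∀ {l : List LTree}, shapeAux l = [] → l = []
  | [], _ => rfl
  | t :: ts, h => by rw [shapeAux] at h; exact absurd h (by simp)

theorem NL_leaf (S : Finset ℕ) (h : S.card = 1) : NL (PlaneTree.node []) S = 1 := by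
  obtain ⟨a, rfl⟩ := Finset.card_eq_one.mp h
  have hset : LabSet (PlaneTree.node []) {a} = {LTree.node a []} := by
    ext t
    constructor
    · rintro ⟨h1, h2, h3⟩
      cases t with
      | node b l =>
        rw [shape] at h1
        injection h1 with h1
        have hl : l = [] := shapeAux_eq_nil h1
        subst hl
        rw [labels, labelsAux] at h3
        have : b ∈ ({a} : Finset ℕ) := by
          rw [Finset.mem_def, ← h3]
          exact Multiset.mem_coe.mpr (List.mem_cons_self)
        rw [Finset.mem_singleton] at this
        subst this
        rfl
    · rintro rfl
      refine ⟨?_, ?_, ?_⟩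
      · rw [shape, shapeAux]
      · rw [inc, incAux]; trivial
      · rw [labels, labelsAux]; rfl
  rw [NL, hset, Nat.card_coe_set_eq, Set.ncard_singleton]

theorem NL_decomp (t₀ : PlaneTree) (ts : List PlaneTree) (S : Finset ℕ)
    (hne : S.Nonempty) :
    NL (PlaneTree.node (t₀ :: ts)) S =
      ∑ A ∈ Finset.powersetCard t₀.size (S.erase (S.min' hne)),
        NL t₀ A * NL (PlaneTree.node ts) (insert (S.min' hne) ((S.erase (S.min' hne)) \ A)) := by
  classical
  set a := S.min' hne with ha
  set S' := S.erase a with hS'def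
  set m := t₀.size with hm
  have haS : a ∈ S := S.min'_mem hne
  have hanotinS' : a ∉ S' := Finset.notMem_erase a S
  -- the fibres
  let F : Finset ℕ → Type := fun A =>
    ↥(LabSet t₀ A) × ↥(LabSet (PlaneTree.node ts) (insert a (S' \ A)))
  -- root of the second component is `a`
  have hroot : ∀ (A : Finset ℕ) (v : LTree),
      v ∈ LabSet (PlaneTree.node ts) (insert a (S' \ A)) → v.rootLabel = a := by
    intro A v hv
    apply root_eq_of_mem_labSet hv (Finset.mem_insert_self a _)
    intro b hb
    rcases Finset.mem_insert.mp hb with rfl | hb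
    · exact le_refl _
    · exact S.min'_le b (Finset.mem_of_mem_erase (Finset.mem_sdiff.mp hb).1)
  -- the forward map is well-defined
  have hval_e : ∀ (A : Finset ℕ), A ∈ Finset.powersetCard m S' →
      ∀ u ∈ LabSet t₀ A, ∀ v ∈ LabSet (PlaneTree.node ts) (insert a (S' \ A)),
      LTree.node a (u :: v.children) ∈ LabSet (PlaneTree.node (t₀ :: ts)) S := by
    intro A hA u hu v hv
    obtain ⟨hA1, hA2⟩ := Finset.mem_powersetCard.mp hA
    have hva : v.rootLabel = a := hroot A v hv
    cases v with
    | node b cs =>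
      rw [rootLabel] at hva
      subst hva
      rw [children]
      have hsh := hv.1
      rw [shape] at hsh
      injection hsh with hsh
      have hinc := hv.2.1
      rw [inc] at hinc
      have hlab := hv.2.2
      rw [labels] at hlab
      rw [← Multiset.cons_coe, Finset.insert_val_of_notMem
        (fun hmem => hanotinS' (Finset.mem_sdiff.mp hmem).1)] at hlab
      have hlab2 : (↑(labelsAux cs) : Multiset ℕ) = (S' \ A).val :=
        (Multiset.cons_inj_right _).mp hlab
      refine ⟨?_, ?_, ?_⟩
      · rw [shape, shapeAux, hu.1, hsh]
      · rw [inc, incAux]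
        refine ⟨⟨?_, hu.2.1⟩, hinc⟩
        have h1 : u.rootLabel ∈ A := labels_mem_of_mem_labSet hu _ (rootLabel_mem_labels u)
        have h3 := Finset.mem_erase.mp (hA1 h1)
        exact lt_of_le_of_ne (S.min'_le _ h3.2) (Ne.symm h3.1)
      · rw [labels, labelsAux]
        have : (↑(u.labels ++ labelsAux cs) : Multiset ℕ) = ↑u.labels + ↑(labelsAux cs) := rfl
        rw [← Multiset.cons_coe, this, hu.2.2, hlab2, Finset.sdiff_val,
          add_tsub_cancel_of_le (Finset.val_le_iff.mpr hA1), hS'def, Finset.erase_val,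
          Multiset.cons_erase (Finset.mem_def.mp haS)]
  -- the forward map
  let e : ((A : {x // x ∈ Finset.powersetCard m S'}) × F A.1) →
      ↥(LabSet (PlaneTree.node (t₀ :: ts)) S) :=
    fun y => ⟨LTree.node a (y.2.1.1 :: (y.2.2.1).children),
      hval_e y.1.1 y.1.2 y.2.1.1 y.2.1.2 y.2.2.1 y.2.2.2⟩
  have hinj : Function.Injective e := by
    rintro ⟨⟨A, hA⟩, ⟨u, hu⟩, ⟨v, hv⟩⟩ ⟨⟨A', hA'⟩, ⟨u', hu'⟩, ⟨v', hv'⟩⟩ h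
    have h0 : LTree.node a (u :: v.children) = LTree.node a (u' :: v'.children) :=
      congrArg Subtype.val h
    injection h0 with h1 h2
    injection h2 with h2 h3
    have hAA : A = A' := Finset.val_inj.mp (by rw [← hu.2.2, ← hu'.2.2, h2])
    subst hAA
    subst h2
    have hveq : v = v' := by
      conv_lhs => rw [node_root_children v]
      conv_rhs => rw [node_root_children v']
      rw [hroot A v hv, hroot A v' hv', h3]
    subst hveq
    rfl
  have hsurj : Function.Surjective e := by
    rintro ⟨x, hx⟩
    cases x with
    | node b cs =>
      have hb : b = a := by
        have h := root_eq_of_mem_labSet hx haS (fun c hc => S.min'_le c hc)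
        rwa [rootLabel] at h
      subst hb
      have hsh := hx.1
      rw [shape] at hsh
      injection hsh with hsh
      cases cs with
      | nil => rw [shapeAux] at hsh; exact absurd hsh (by simp)
      | cons u us =>
        rw [shapeAux] at hsh
        injection hsh with hsh1 hsh2
        have hinc := hx.2.1
        rw [inc, incAux] at hinc
        have hlab := hx.2.2
        rw [labels, labelsAux] at hlab
        have hnodup : (a :: (u.labels ++ labelsAux us)).Nodup :=
          Multiset.coe_nodup.mp (by rw [hlab]; exact S.nodup)
        obtain ⟨hnotmem, hnodup2⟩ := List.nodup_cons.mp hnodup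
        obtain ⟨hnd1, hnd2, hdisj⟩ := List.nodup_append.mp hnodup2
        set A : Finset ℕ := ⟨(↑u.labels : Multiset ℕ), Multiset.coe_nodup.mpr hnd1⟩ with hAdef
        have hmemlab : ∀ x, x ∈ (a :: (u.labels ++ labelsAux us)) → x ∈ S := by
          intro x hxm
          rw [Finset.mem_def, ← hlab]
          exact Multiset.mem_coe.mpr hxm
        have hApc : A ∈ Finset.powersetCard m S' := by
          rw [Finset.mem_powersetCard]
          constructor
          · intro x hxA
            have hxl : x ∈ u.labels := Multiset.mem_coe.mp hxA
            rw [hS'def, Finset.mem_erase]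
            refine ⟨?_, hmemlab x (List.mem_cons_of_mem _ (List.mem_append_left _ hxl))⟩
            intro hxa
            exact hnotmem (hxa ▸ List.mem_append_left _ hxl)
          · show Multiset.card (↑u.labels : Multiset ℕ) = m
            rw [Multiset.coe_card, labels_length, hsh1]
        have huA : u ∈ LabSet t₀ A := ⟨hsh1, hinc.1.2, rfl⟩
        have hSv : S'.val = (↑u.labels : Multiset ℕ) + ↑(labelsAux us) := by
          rw [hS'def, Finset.erase_val, ← hlab]
          rw [← Multiset.cons_coe]
          rw [Multiset.erase_cons_head]
          rfl
        have hvmem : LTree.node a us ∈ LabSet (PlaneTree.node ts) (insert a (S' \ A)) := by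
          refine ⟨?_, ?_, ?_⟩
          · rw [shape, hsh2]
          · rw [inc]; exact hinc.2
          · rw [labels, Finset.insert_val_of_notMem
              (fun hmem => hanotinS' (Finset.mem_sdiff.mp hmem).1), Finset.sdiff_val, hSv]
            have hAv : A.val = (↑u.labels : Multiset ℕ) := rfl
            rw [hAv, add_tsub_cancel_left, Multiset.cons_coe]
        refine ⟨⟨⟨A, hApc⟩, ⟨u, huA⟩, ⟨LTree.node a us, hvmem⟩⟩, ?_⟩
        apply Subtype.ext
        show LTree.node a (u :: (LTree.node a us).children) = LTree.node a (u :: us)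
        rw [children]
  -- counting
  have hcongr : NL (PlaneTree.node (t₀ :: ts)) S =
      Nat.card ((A : {x // x ∈ Finset.powersetCard m S'}) × F A.1) :=
    (Nat.card_congr (Equiv.ofBijective e ⟨hinj, hsurj⟩)).symm
  rw [hcongr]
  have hfinF : ∀ (A : {x // x ∈ Finset.powersetCard m S'}), Finite (F A.1) := by
    intro A
    exact inferInstanceAs (Finite (_ × _))
  letI : ∀ (A : {x // x ∈ Finset.powersetCard m S'}), Fintype (F A.1) :=
    fun A => @Fintype.ofFinite _ (hfinF A)
  rw [Nat.card_eq_fintype_card, Fintype.card_sigma,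
    ← Finset.sum_coe_sort (Finset.powersetCard m S')
      (fun A => NL t₀ A * NL (PlaneTree.node ts) (insert a (S' \ A)))]
  apply Finset.sum_congr rfl
  intro A _
  rw [← Nat.card_eq_fintype_card]
  exact Nat.card_prod _ _

/-- a canonical label set of cardinality `n` -/
def stdSet (n : ℕ) : Finset ℕ := ⟨(List.range' 1 n : List ℕ), by
  exact Multiset.coe_nodup.mpr (List.nodup_range' (s := 1) (n := n))⟩

theorem stdSet_card (n : ℕ) : (stdSet n).card = n := by
  simp [stdSet, Finset.card]

theorem key (n : ℕ) : ∀ T : PlaneTree, T.size = n → ∀ S : Finset ℕ, S.card = T.size →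
    NL T S * T.hookProd = Nat.factorial T.size := by
  induction n using Nat.strong_induction_on with
  | _ n ih =>
  rintro ⟨ts⟩ rfl S hS
  cases ts with
  | nil =>
    have h1 : (PlaneTree.node []).size = 1 := by rw [PlaneTree.size, PlaneTree.sizeAux]
    rw [NL_leaf S (by rw [hS, h1]), h1, PlaneTree.hookProd, PlaneTree.hookProdAux, h1]
    rfl
  | cons t₀ ts =>
    set m := t₀.size with hm
    set k := PlaneTree.sizeAux ts with hk
    have hsize : (PlaneTree.node (t₀ :: ts)).size = 1 + (m + k) := by
      rw [PlaneTree.size, PlaneTree.sizeAux]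
    have hksize : (PlaneTree.node ts).size = 1 + k := by rw [PlaneTree.size]
    have hm1 : 1 ≤ m := t₀.size_pos
    have hne : S.Nonempty := by
      rw [← Finset.card_pos, hS, hsize]; omega
    have hS' : (S.erase (S.min' hne)).card = m + k := by
      rw [Finset.card_erase_of_mem (S.min'_mem hne), hS, hsize]
      omega
    rw [NL_decomp t₀ ts S hne]
    set a := S.min' hne
    set S' := S.erase a
    set c1 := NL t₀ (stdSet m) with hc1
    set c2 := NL (PlaneTree.node ts) (stdSet (1+k)) with hc2
    have hsummand : ∀ A ∈ Finset.powersetCard m S',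
        NL t₀ A * NL (PlaneTree.node ts) (insert a (S' \ A)) = c1 * c2 := by
      intro A hA
      obtain ⟨hsub, hcard⟩ := Finset.mem_powersetCard.mp hA
      have hanotin : a ∉ S' \ A :=
        fun hmem => (Finset.mem_erase.mp (Finset.mem_sdiff.mp hmem).1).1 rfl
      rw [NL_eq_of_card_eq t₀ A (stdSet m) (by rw [hcard, stdSet_card]),
        NL_eq_of_card_eq (PlaneTree.node ts) _ (stdSet (1+k)) (by
          rw [stdSet_card, Finset.card_insert_of_notMem hanotin, Finset.card_sdiff_of_subset hsub,
            hS', hcard]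
          omega)]
    rw [Finset.sum_congr rfl hsummand, Finset.sum_const, Finset.card_powersetCard, hS',
      smul_eq_mul]
    have ih1 : c1 * t₀.hookProd = Nat.factorial m := by
      have h := ih m (by rw [hsize]; omega) t₀ rfl (stdSet m) (by rw [stdSet_card])
      rwa [← hm] at h
    have ih2 : c2 * (PlaneTree.node ts).hookProd = Nat.factorial (1+k) := by
      have h := ih (1+k) (by rw [hsize]; omega) (PlaneTree.node ts) hksize (stdSet (1+k))
        (by rw [stdSet_card, hksize])
      rwa [← hksize]
    rw [PlaneTree.hookProd, PlaneTree.hookProdAux, hsize]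
    rw [PlaneTree.hookProd, hksize] at ih2
    set H := PlaneTree.hookProdAux ts with hH
    have hchoose : (m+k).choose m * Nat.factorial m * Nat.factorial k = Nat.factorial (m+k) := by
      have h := Nat.choose_mul_factorial_mul_factorial (Nat.le_add_right m k)
      simpa using h
    refine Nat.eq_of_mul_eq_mul_right (show 0 < 1 + k by omega) ?_
    calc (m+k).choose m * (c1 * c2) * ((1+(m+k)) * (t₀.hookProd * H)) * (1+k)
        = (m+k).choose m * (c1 * t₀.hookProd) * (c2 * ((1+k) * H)) * (1+(m+k)) := by ring
      _ = (m+k).choose m * Nat.factorial m * Nat.factorial (1+k) * (1+(m+k)) := by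
          rw [ih1, ih2]
      _ = ((m+k).choose m * Nat.factorial m * Nat.factorial k) * (k+1) * (1+(m+k)) := by
          rw [show 1+k = k+1 by ring, Nat.factorial_succ]; ring
      _ = Nat.factorial (m+k) * (k+1) * (1+(m+k)) := by rw [hchoose]
      _ = Nat.factorial (1+(m+k)) * (1+k) := by
          rw [show 1+(m+k) = (m+k)+1 by ring, Nat.factorial_succ]; ring

theorem numIncLab_eq (T : PlaneTree) : numIncLab T = NL T (stdSet T.size) := by
  rw [numIncLab, NL, Nat.card_coe_set_eq]
  congr 1
  ext t
  simp only [LabSet, Set.mem_setOf_eq]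
  constructor
  · rintro ⟨h1, h2, h3⟩
    exact ⟨h1, h2, Multiset.coe_eq_coe.mpr h3⟩
  · rintro ⟨h1, h2, h3⟩
    exact ⟨h1, h2, Multiset.coe_eq_coe.mp h3⟩

/-- Hook-length formula: for every plane rooted tree `T` of size `n`, the number of
increasing labellings of `T` equals `n!` divided by the product of the sizes of all
subtrees of `T`. -/
theorem hook_length_formula (T : PlaneTree) :
    numIncLab T = Nat.factorial T.size / T.hookProd := by
  have h := key T.size T rfl (stdSet T.size) (by rw [stdSet_card])
  rw [numIncLab_eq]
  exact (Nat.div_eq_of_eq_mul_left T.hookProd_pos (by rw [← h, Nat.mul_comm])).symm
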